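/- In the Set Cover reduction graph with seed set S = {s}, for every k with 1 ≤ k ≤ m the following equivalence holds: there exists an index set I ⊆ {1, …, m} with |I| = k and ⋃_{i∈I} C_i = X if and only if there exists a boost set B ⊆ V \ {s} with |B| = k and σ_{{s}}(B) ≥ 1 + k + (m − k)/2 + n. (This is the correctness of the reduction establishing the NP-hardness of the k-boosting problem.) -/

import Mathlib

open Finset
open scoped Classical

noncomputable section

variable {V : Type*}

/-- The probability weight of the live-edge configuration `L ⊆ E`:
each edge `e ∈ E` is independently live with probability `p e`. -/
def edgeWeight [DecidableEq V] (E : Finset (V × V)) (p : V × V → ℝ)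
    (L : Finset (V × V)) : ℝ :=
  (∏ e ∈ L, p e) * ∏ e ∈ E \ L, (1 - p e)

/-- `v` is activated in configuration `L`: it is reachable from some seed in `S`
through live (directed) edges. -/
def Reaches (L : Finset (V × V)) (S : Finset V) (v : V) : Prop :=
  ∃ s ∈ S, Relation.ReflTransGen (fun a b => (a, b) ∈ L) s v

/-- Activation probability of node `v` under the live-edge model with edge set `E`,
edge probabilities `p`, and seed set `S`. -/
def ap [Fintype V] [DecidableEq V] (E : Finset (V × V)) (p : V × V → ℝ)
    (S : Finset V) (v : V) : ℝ :=
  ∑ L ∈ E.powerset, edgeWeight E p L * (if Reaches L S v then 1 else 0)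

/-- Expected number of activated nodes lying in the node set `W`. -/
def spreadOn [Fintype V] [DecidableEq V] (E : Finset (V × V)) (p : V × V → ℝ)
    (S W : Finset V) : ℝ :=
  ∑ L ∈ E.powerset, edgeWeight E p L * ((W.filter (fun v => Reaches L S v)).card : ℝ)

/-- The influence spread `σ_S`: expected total number of activated nodes. -/
def spread [Fintype V] [DecidableEq V] (E : Finset (V × V)) (p : V × V → ℝ)
    (S : Finset V) : ℝ :=
  spreadOn E p S Finset.univ

/-- Boosted edge probabilities: edges pointing into a boosted node use `p'`. -/
def pB (p p' : V × V → ℝ) (B : Finset V) : V × V → ℝ :=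
  fun e => if e.2 ∈ B then p' e else p e

/-- The bidirected edge set of an undirected graph: each undirected edge is
replaced by the two directed edges. -/
def treeEdges [Fintype V] [DecidableEq V] (T : SimpleGraph V) [DecidableRel T.Adj] :
    Finset (V × V) :=
  Finset.univ.filter (fun e => T.Adj e.1 e.2)

/-- `apSub E p S v u` is `ap_B(v\u)`: the activation probability of `v` in the
subtree `G_{v\u}` obtained by removing the directed edges `(u,v)` and `(v,u)`. -/
def apSub [Fintype V] [DecidableEq V] (E : Finset (V × V)) (p : V × V → ℝ)
    (S : Finset V) (v u : V) : ℝ :=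
  ap (E \ {(u, v), (v, u)}) p S v

/-- The set of nodes of the connected component containing `v` w.r.t. edge set `E`. -/
def comp [Fintype V] [DecidableEq V] (E : Finset (V × V)) (v : V) : Finset V :=
  Finset.univ.filter (fun w => Relation.ReflTransGen (fun a b => (a, b) ∈ E) v w)

/-- `gain E p S v u` is `g_B(v\u)`: in the subtree `G_{v\u}`, the expected number of
activated nodes when the seed set is `(S ∩ V(G_{v\u})) ∪ {v}` minus the expected
number when the seed set is `S ∩ V(G_{v\u})`. -/
def gain [Fintype V] [DecidableEq V] (E : Finset (V × V)) (p : V × V → ℝ)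
    (S : Finset V) (v u : V) : ℝ :=
  spreadOn (E \ {(u, v), (v, u)}) p (insert v (S ∩ comp (E \ {(u, v), (v, u)}) v))
      (comp (E \ {(u, v), (v, u)}) v)
    - spreadOn (E \ {(u, v), (v, u)}) p (S ∩ comp (E \ {(u, v), (v, u)}) v)
      (comp (E \ {(u, v), (v, u)}) v)


/-- Node type of the Set Cover reduction graph: the seed `s`, the set-nodes
`c_1, …, c_m`, and the element-nodes `x_1, …, x_n`. -/
abbrev SCNode (m n : ℕ) := Unit ⊕ (Fin m ⊕ Fin n)

def sNode {m n : ℕ} : SCNode m n := Sum.inl ()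

def cNode {m n : ℕ} (i : Fin m) : SCNode m n := Sum.inr (Sum.inl i)

def xNode {m n : ℕ} (j : Fin n) : SCNode m n := Sum.inr (Sum.inr j)

/-- Edges of the Set Cover reduction graph: `(s, c_i)` for every `i`, and
`(c_i, x_j)` whenever `e_j ∈ C_i`. -/
def scEdges (m n : ℕ) (C : Fin m → Finset (Fin n)) :
    Finset (SCNode m n × SCNode m n) :=
  (Finset.univ.image fun i : Fin m => (sNode, cNode i)) ∪
    (((Finset.univ : Finset (Fin m × Fin n)).filter fun ij => ij.2 ∈ C ij.1).image
      fun ij => (cNode ij.1, xNode ij.2))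

/-- Influence probabilities: `1/2` on edges into the `c_i`'s, `1` on edges
into the `x_j`'s. -/
def scP (m n : ℕ) : SCNode m n × SCNode m n → ℝ :=
  fun e => match e.2 with
  | Sum.inr (Sum.inl _) => 1 / 2
  | _ => 1

/-- Boosted influence probabilities: `1` on every edge. -/
def scP' (m n : ℕ) : SCNode m n × SCNode m n → ℝ := fun _ => 1

/-- In-degree `d_j` of the element node `x_j`: number of sets containing `e_j`. -/
def scDeg {m n : ℕ} (C : Fin m → Finset (Fin n)) (j : Fin n) : ℕ :=
  (Finset.univ.filter fun i : Fin m => j ∈ C i).card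

section Aux
set_option linter.unusedSectionVars false
variable [Fintype V] [DecidableEq V]

lemma edgeWeight_sum (E : Finset (V × V)) (p : V × V → ℝ) :
    ∑ L ∈ E.powerset, edgeWeight E p L = 1 := by
  have h := Finset.prod_add p (fun e => 1 - p e) E
  simp only [add_sub_cancel, Finset.prod_const_one] at h
  exact h.symm

lemma edgeWeight_nonneg {E : Finset (V × V)} {p : V × V → ℝ}
    (h0 : ∀ e ∈ E, 0 ≤ p e) (h1 : ∀ e ∈ E, p e ≤ 1) {L : Finset (V × V)} (hL : L ⊆ E) :
    0 ≤ edgeWeight E p L := by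
  apply mul_nonneg
  · exact Finset.prod_nonneg fun e he => h0 e (hL he)
  · exact Finset.prod_nonneg fun e he => by
      have := h1 e (Finset.mem_sdiff.mp he).1; linarith

lemma edgeWeight_mem_of_ne_zero {E : Finset (V × V)} {p : V × V → ℝ}
    {L : Finset (V × V)} {e : V × V} (he : e ∈ E) (hp : p e = 1)
    (hw : edgeWeight E p L ≠ 0) : e ∈ L := by
  by_contra h
  apply hw
  have heL : e ∈ E \ L := Finset.mem_sdiff.mpr ⟨he, h⟩
  unfold edgeWeight
  rw [Finset.prod_eq_zero heL (by rw [hp]; ring)]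
  ring

lemma ap_eq_one {E : Finset (V × V)} {p : V × V → ℝ} {S : Finset V} {v : V}
    (h : ∀ L ∈ E.powerset, edgeWeight E p L ≠ 0 → Reaches L S v) :
    ap E p S v = 1 := by
  calc ap E p S v = ∑ L ∈ E.powerset, edgeWeight E p L := by
        apply Finset.sum_congr rfl
        intro L hL
        by_cases hw : edgeWeight E p L = 0
        · rw [hw]; ring
        · rw [if_pos (h L hL hw), mul_one]
    _ = 1 := edgeWeight_sum E p

lemma sum_edgeWeight_mem {E : Finset (V × V)} {p : V × V → ℝ} {e : V × V} (he : e ∈ E) :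
    ∑ L ∈ E.powerset, edgeWeight E p L * (if e ∈ L then 1 else 0) = p e := by
  have hE : E = insert e (E.erase e) := (Finset.insert_erase he).symm
  rw [hE, Finset.sum_powerset_insert (Finset.notMem_erase e E)]
  have h1 : ∀ t ∈ (E.erase e).powerset,
      edgeWeight (insert e (E.erase e)) p t * (if e ∈ t then 1 else 0) = 0 := by
    intro t ht
    rw [if_neg (fun hc => Finset.notMem_erase e E (Finset.mem_powerset.mp ht hc)), mul_zero]
  rw [Finset.sum_congr rfl h1, Finset.sum_const_zero, zero_add]
  have h2 : ∀ t ∈ (E.erase e).powerset,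
      edgeWeight (insert e (E.erase e)) p (insert e t) * (if e ∈ insert e t then 1 else 0)
        = p e * edgeWeight (E.erase e) p t := by
    intro t ht
    have hte : e ∉ t := fun hc => Finset.notMem_erase e E (Finset.mem_powerset.mp ht hc)
    rw [if_pos (Finset.mem_insert_self e t), mul_one, edgeWeight, edgeWeight,
      Finset.prod_insert hte]
    have : insert e (E.erase e) \ insert e t = E.erase e \ t := by
      ext a
      simp only [Finset.mem_sdiff, Finset.mem_insert, Finset.mem_erase]
      tauto
    rw [this]; ring
  rw [Finset.sum_congr rfl h2, ← Finset.mul_sum, edgeWeight_sum, mul_one]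

lemma ap_eq_p {E : Finset (V × V)} {p : V × V → ℝ} {S : Finset V} {v : V} {e : V × V}
    (he : e ∈ E) (h : ∀ L ∈ E.powerset, (Reaches L S v ↔ e ∈ L)) :
    ap E p S v = p e := by
  calc ap E p S v = ∑ L ∈ E.powerset, edgeWeight E p L * (if e ∈ L then 1 else 0) :=
        Finset.sum_congr rfl fun L hL => by rw [if_congr (h L hL) rfl rfl]
    _ = p e := sum_edgeWeight_mem he

lemma ap_le_one {E : Finset (V × V)} {p : V × V → ℝ} {S : Finset V} {v : V}
    (h0 : ∀ e ∈ E, 0 ≤ p e) (h1 : ∀ e ∈ E, p e ≤ 1) :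
    ap E p S v ≤ 1 := by
  calc ap E p S v ≤ ∑ L ∈ E.powerset, edgeWeight E p L := by
        apply Finset.sum_le_sum
        intro L hL
        have hw := edgeWeight_nonneg h0 h1 (Finset.mem_powerset.mp hL)
        by_cases hr : Reaches L S v
        · rw [if_pos hr, mul_one]
        · rw [if_neg hr, mul_zero]; exact hw
    _ = 1 := edgeWeight_sum E p

lemma ap_nonneg {E : Finset (V × V)} {p : V × V → ℝ} {S : Finset V} {v : V}
    (h0 : ∀ e ∈ E, 0 ≤ p e) (h1 : ∀ e ∈ E, p e ≤ 1) :
    0 ≤ ap E p S v := by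
  apply Finset.sum_nonneg
  intro L hL
  have hw := edgeWeight_nonneg h0 h1 (Finset.mem_powerset.mp hL)
  positivity

lemma ap_le_of_not_reaches {E : Finset (V × V)} {p : V × V → ℝ} {S : Finset V} {v : V}
    {L0 : Finset (V × V)} (hL0 : L0 ⊆ E) (hnr : ¬ Reaches L0 S v)
    (h0 : ∀ e ∈ E, 0 ≤ p e) (h1 : ∀ e ∈ E, p e ≤ 1) :
    ap E p S v ≤ 1 - edgeWeight E p L0 := by
  have hmem : L0 ∈ E.powerset := Finset.mem_powerset.mpr hL0
  have key : ap E p S v + edgeWeight E p L0 ≤ ∑ L ∈ E.powerset, edgeWeight E p L := by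
    rw [ap, ← Finset.add_sum_erase _ (fun L => edgeWeight E p L * (if Reaches L S v then 1 else 0)) hmem,
      if_neg hnr, mul_zero, zero_add,
      ← Finset.add_sum_erase _ (edgeWeight E p) hmem, add_comm]
    apply add_le_add le_rfl
    apply Finset.sum_le_sum
    intro L hL
    have hw := edgeWeight_nonneg h0 h1 (Finset.mem_powerset.mp (Finset.mem_of_mem_erase hL))
    by_cases hr : Reaches L S v
    · rw [if_pos hr, mul_one]
    · rw [if_neg hr, mul_zero]; exact hw
  rw [edgeWeight_sum] at key
  linarith

lemma spread_eq_sum_ap (E : Finset (V × V)) (p : V × V → ℝ) (S : Finset V) :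
    spread E p S = ∑ v, ap E p S v := by
  rw [spread, spreadOn]
  simp_rw [← Finset.sum_boole, Finset.mul_sum]
  rw [Finset.sum_comm]
  rfl

end Aux

section Graph
variable {m n : ℕ} {C : Fin m → Finset (Fin n)}

lemma mem_scEdges {a b : SCNode m n} :
    (a, b) ∈ scEdges m n C ↔
      (∃ i, a = sNode ∧ b = cNode i) ∨ (∃ i j, j ∈ C i ∧ a = cNode i ∧ b = xNode j) := by
  simp only [scEdges, Finset.mem_union, Finset.mem_image, Finset.mem_filter, Finset.mem_univ,
    true_and, Prod.mk.injEq, Prod.exists]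
  constructor
  · rintro (⟨i, h1, h2⟩ | ⟨i, j, hij, h1, h2⟩)
    · exact Or.inl ⟨i, h1.symm, h2.symm⟩
    · exact Or.inr ⟨i, j, hij, h1.symm, h2.symm⟩
  · rintro (⟨i, h1, h2⟩ | ⟨i, j, hij, h1, h2⟩)
    · exact Or.inl ⟨i, h1.symm, h2.symm⟩
    · exact Or.inr ⟨i, j, hij, h1.symm, h2.symm⟩

lemma reaches_sNode (L : Finset (SCNode m n × SCNode m n)) :
    Reaches L ({sNode} : Finset (SCNode m n)) sNode :=
  ⟨sNode, Finset.mem_singleton_self _, Relation.ReflTransGen.refl⟩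

lemma rtg_cNode {L : Finset (SCNode m n × SCNode m n)} (hL : L ⊆ scEdges m n C) {i : Fin m}
    (h : Relation.ReflTransGen (fun a b => (a, b) ∈ L) sNode (cNode i)) :
    (sNode, cNode i) ∈ L := by
  rcases h.cases_tail with h1 | ⟨c, _, hcb⟩
  · exact absurd h1 (by simp [sNode, cNode])
  · have := hL hcb
    rcases mem_scEdges.mp this with ⟨i', h1, h2⟩ | ⟨i', j', _, _, h2⟩
    · rw [← h1]; exact hcb
    · exact absurd h2 (by simp [cNode, xNode])

lemma reaches_cNode_iff {L : Finset (SCNode m n × SCNode m n)} (hL : L ⊆ scEdges m n C)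
    {i : Fin m} :
    Reaches L ({sNode} : Finset (SCNode m n)) (cNode i) ↔ (sNode, cNode i) ∈ L := by
  constructor
  · rintro ⟨s', hs', h⟩
    rw [Finset.mem_singleton] at hs'; subst hs'
    exact rtg_cNode hL h
  · intro h
    exact ⟨sNode, Finset.mem_singleton_self _, Relation.ReflTransGen.single h⟩

lemma reaches_xNode_iff {L : Finset (SCNode m n × SCNode m n)} (hL : L ⊆ scEdges m n C)
    {j : Fin n} :
    Reaches L ({sNode} : Finset (SCNode m n)) (xNode j) ↔
      ∃ i, j ∈ C i ∧ (sNode, cNode i) ∈ L ∧ (cNode i, xNode j) ∈ L := by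
  constructor
  · rintro ⟨s', hs', h⟩
    rw [Finset.mem_singleton] at hs'; subst hs'
    rcases h.cases_tail with h1 | ⟨c, hc, hcb⟩
    · exact absurd h1 (by simp [sNode, xNode])
    · rcases mem_scEdges.mp (hL hcb) with ⟨i', _, h2⟩ | ⟨i', j', hij, h1, h2⟩
      · exact absurd h2 (by simp [cNode, xNode])
      · subst h1
        have hj : j' = j := by simpa [xNode] using h2.symm
        subst hj
        exact ⟨i', hij, rtg_cNode hL hc, by rw [← h2]; exact hcb⟩
  · rintro ⟨i, _, h1, h2⟩
    exact ⟨sNode, Finset.mem_singleton_self _,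
      (Relation.ReflTransGen.single h1).tail h2⟩

lemma scE_mem_sc {i : Fin m} : (sNode, cNode i) ∈ scEdges m n C :=
  mem_scEdges.mpr (Or.inl ⟨i, rfl, rfl⟩)

lemma scE_mem_cx {i : Fin m} {j : Fin n} (h : j ∈ C i) : (cNode i, xNode j) ∈ scEdges m n C :=
  mem_scEdges.mpr (Or.inr ⟨i, j, h, rfl, rfl⟩)

lemma pB_sc {B : Finset (SCNode m n)} {i : Fin m} :
    pB (scP m n) (scP' m n) B (sNode, cNode i) = if cNode i ∈ B then 1 else 1 / 2 := by
  by_cases h : cNode i ∈ B <;> simp [pB, cNode, h, scP, scP']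

lemma pB_cx {B : Finset (SCNode m n)} {i : Fin m} {j : Fin n} :
    pB (scP m n) (scP' m n) B (cNode i, xNode j) = 1 := by
  simp only [pB]
  split_ifs <;> rfl

lemma pB_bounds {B : Finset (SCNode m n)} {e : SCNode m n × SCNode m n}
    (he : e ∈ scEdges m n C) : 0 ≤ pB (scP m n) (scP' m n) B e ∧ pB (scP m n) (scP' m n) B e ≤ 1 := by
  obtain ⟨a, b⟩ := e
  rcases mem_scEdges.mp he with ⟨i, h1, h2⟩ | ⟨i, j, _, h1, h2⟩ <;> subst h1 <;> subst h2
  · rw [pB_sc]; split <;> norm_num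
  · rw [pB_cx]; norm_num

end Graph

section Ap
variable {m n : ℕ} {C : Fin m → Finset (Fin n)} {B : Finset (SCNode m n)}

lemma h0B : ∀ e ∈ scEdges m n C, 0 ≤ pB (scP m n) (scP' m n) B e :=
  fun _ he => (pB_bounds he).1

lemma h1B : ∀ e ∈ scEdges m n C, pB (scP m n) (scP' m n) B e ≤ 1 :=
  fun _ he => (pB_bounds he).2

lemma ap_s : ap (scEdges m n C) (pB (scP m n) (scP' m n) B)
    ({sNode} : Finset (SCNode m n)) sNode = 1 :=
  ap_eq_one fun L _ _ => reaches_sNode L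

lemma ap_c (i : Fin m) : ap (scEdges m n C) (pB (scP m n) (scP' m n) B)
    ({sNode} : Finset (SCNode m n)) (cNode i) = if cNode i ∈ B then 1 else 1 / 2 := by
  rw [ap_eq_p scE_mem_sc (fun L hL => reaches_cNode_iff (Finset.mem_powerset.mp hL)), pB_sc]

lemma ap_x_one {j : Fin n} {i : Fin m} (hij : j ∈ C i) (hiB : cNode i ∈ B) :
    ap (scEdges m n C) (pB (scP m n) (scP' m n) B)
      ({sNode} : Finset (SCNode m n)) (xNode j) = 1 := by
  apply ap_eq_one
  intro L hL hw
  have h1 : (sNode, cNode i) ∈ L :=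
    edgeWeight_mem_of_ne_zero scE_mem_sc (by rw [pB_sc, if_pos hiB]) hw
  have h2 : (cNode i, xNode j) ∈ L :=
    edgeWeight_mem_of_ne_zero (scE_mem_cx hij) pB_cx hw
  exact (reaches_xNode_iff (Finset.mem_powerset.mp hL)).mpr ⟨i, hij, h1, h2⟩

lemma ap_x_le_one {j : Fin n} :
    ap (scEdges m n C) (pB (scP m n) (scP' m n) B)
      ({sNode} : Finset (SCNode m n)) (xNode j) ≤ 1 :=
  ap_le_one h0B h1B

lemma ap_x_lt_one {j : Fin n} (hunc : ∀ i, j ∈ C i → cNode i ∉ B) :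
    ap (scEdges m n C) (pB (scP m n) (scP' m n) B)
      ({sNode} : Finset (SCNode m n)) (xNode j) < 1 := by
  set E := scEdges m n C with hE
  set p := pB (scP m n) (scP' m n) B with hp
  set L0 := E.filter (fun e => ∀ i, j ∈ C i → e ≠ (sNode, cNode i)) with hL0
  have hL0E : L0 ⊆ E := Finset.filter_subset _ _
  have hnr : ¬ Reaches L0 ({sNode} : Finset (SCNode m n)) (xNode j) := by
    intro hr
    obtain ⟨i, hij, h1, _⟩ := (reaches_xNode_iff hL0E).mp hr
    exact (Finset.mem_filter.mp h1).2 i hij rfl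
  have hwpos : 0 < edgeWeight E p L0 := by
    apply mul_pos
    · apply Finset.prod_pos
      intro e he
      have heE := hL0E he
      obtain ⟨a, b⟩ := e
      rcases mem_scEdges.mp heE with ⟨i, ha, hb⟩ | ⟨i, j', _, ha, hb⟩ <;> subst ha <;> subst hb
      · rw [hp, pB_sc]; split <;> norm_num
      · rw [hp, pB_cx]; norm_num
    · apply Finset.prod_pos
      intro e he
      obtain ⟨heE, hne⟩ := Finset.mem_sdiff.mp he
      have : ¬ (∀ i, j ∈ C i → e ≠ (sNode, cNode i)) := by
        intro hc
        exact hne (Finset.mem_filter.mpr ⟨heE, hc⟩)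
      push_neg at this
      obtain ⟨i, hij, hei⟩ := this
      subst hei
      rw [hp, pB_sc, if_neg (hunc i hij)]
      norm_num
  have := ap_le_of_not_reaches (p := p) (S := ({sNode} : Finset (SCNode m n)))
    (v := xNode j) hL0E hnr (h0B (B := B)) (h1B (B := B))
  linarith

lemma spread_formula (hsB : sNode ∉ B) :
    spread (scEdges m n C) (pB (scP m n) (scP' m n) B) ({sNode} : Finset (SCNode m n)) =
      1 + (m : ℝ) / 2 + ((Finset.univ.filter fun i : Fin m => cNode i ∈ B).card : ℝ) / 2 +
        ∑ j : Fin n, ap (scEdges m n C) (pB (scP m n) (scP' m n) B)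
          ({sNode} : Finset (SCNode m n)) (xNode j) := by
  rw [spread_eq_sum_ap, Fintype.sum_sum_type, Fintype.sum_sum_type]
  simp only [Fintype.univ_unit, Finset.sum_singleton]
  have hs : ap (scEdges m n C) (pB (scP m n) (scP' m n) B)
      ({sNode} : Finset (SCNode m n)) (Sum.inl ()) = 1 := ap_s
  have hc1 : ∀ i : Fin m, ap (scEdges m n C) (pB (scP m n) (scP' m n) B)
      ({sNode} : Finset (SCNode m n)) (Sum.inr (Sum.inl i)) =
      (1:ℝ)/2 + (if cNode i ∈ B then (1:ℝ)/2 else 0) := by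
    intro i
    rw [show (Sum.inr (Sum.inl i) : SCNode m n) = cNode i from rfl, ap_c]
    split <;> norm_num
  rw [hs, Finset.sum_congr rfl (fun i _ => hc1 i), Finset.sum_add_distrib,
    Finset.sum_const, ← Finset.sum_filter, Finset.sum_const]
  simp only [Finset.card_univ, Fintype.card_fin, nsmul_eq_mul, xNode]
  ring

end Ap

lemma cNode_injective {m n : ℕ} : Function.Injective (cNode : Fin m → SCNode m n) :=
  fun a b h => by simpa [cNode] using h


/-- Correctness of the Set Cover reduction (NP-hardness of the `k`-boosting
problem): for `1 ≤ k ≤ m`, there is a set cover of size `k` iff there is a boost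
set `B ⊆ V \ {s}` with `|B| = k` and `σ_{{s}}(B) ≥ 1 + k + (m − k)/2 + n`. -/
theorem setCover_reduction_correct (m n k : ℕ) (C : Fin m → Finset (Fin n))
    (hcov : ∀ j : Fin n, ∃ i : Fin m, j ∈ C i) (hk1 : 1 ≤ k) (hkm : k ≤ m) :
    (∃ I : Finset (Fin m), I.card = k ∧ ∀ j : Fin n, ∃ i ∈ I, j ∈ C i) ↔
      (∃ B : Finset (SCNode m n), sNode ∉ B ∧ B.card = k ∧
        spread (scEdges m n C) (pB (scP m n) (scP' m n) B)
            ({sNode} : Finset (SCNode m n)) ≥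
          1 + (k : ℝ) + ((m : ℝ) - k) / 2 + n) := by
  constructor
  · rintro ⟨I, hIcard, hIcov⟩
    refine ⟨I.image cNode, ?_, ?_, ?_⟩
    · intro h
      obtain ⟨i, _, hi⟩ := Finset.mem_image.mp h
      exact absurd hi.symm (by simp [sNode, cNode])
    · rw [Finset.card_image_of_injective I cNode_injective, hIcard]
    · set B := I.image cNode with hB
      have hsB : sNode ∉ B := by
        intro h
        obtain ⟨i, _, hi⟩ := Finset.mem_image.mp h
        exact absurd hi.symm (by simp [sNode, cNode])
      have hmemB : ∀ i : Fin m, cNode i ∈ B ↔ i ∈ I := by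
        intro i
        constructor
        · intro h
          obtain ⟨i', hi', he⟩ := Finset.mem_image.mp h
          rwa [← cNode_injective he]
        · intro h; exact Finset.mem_image_of_mem _ h
      rw [spread_formula hsB]
      have hfil : (Finset.univ.filter fun i : Fin m => cNode i ∈ B) = I := by
        ext i; simp [hmemB i]
      have hx : ∑ j : Fin n, ap (scEdges m n C) (pB (scP m n) (scP' m n) B)
          ({sNode} : Finset (SCNode m n)) (xNode j) = n := by
        rw [Finset.sum_congr rfl (fun j _ => by
          obtain ⟨i, hiI, hij⟩ := hIcov j
          exact ap_x_one hij ((hmemB i).mpr hiI))]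
        simp
      rw [hfil, hIcard, hx]
      push_cast
      linarith
  · rintro ⟨B, hsB, hBk, hsp⟩
    set I := Finset.univ.filter (fun i : Fin m => cNode i ∈ B) with hI
    have hIB : I.image cNode ⊆ B := by
      intro b hb
      obtain ⟨i, hi, he⟩ := Finset.mem_image.mp hb
      rw [← he]
      exact (Finset.mem_filter.mp hi).2
    have hIle : I.card ≤ k := by
      rw [← hBk, ← Finset.card_image_of_injective I cNode_injective]
      exact Finset.card_le_card hIB
    rw [spread_formula hsB, ← hI] at hsp
    set SX := ∑ j : Fin n, ap (scEdges m n C) (pB (scP m n) (scP' m n) B)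
        ({sNode} : Finset (SCNode m n)) (xNode j) with hSX
    have hSXle : SX ≤ n := by
      calc SX ≤ ∑ _j : Fin n, (1:ℝ) := Finset.sum_le_sum fun j _ => ap_x_le_one
        _ = n := by simp
    have hIlecast : (I.card : ℝ) ≤ k := by exact_mod_cast hIle
    have hcover : ∀ j : Fin n, ∃ i ∈ I, j ∈ C i := by
      by_contra hc
      push_neg at hc
      obtain ⟨j, hj⟩ := hc
      have hunc : ∀ i, j ∈ C i → cNode i ∉ B := by
        intro i hij hiB
        exact hj i (Finset.mem_filter.mpr ⟨Finset.mem_univ i, hiB⟩) hij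
      have hlt : SX < n := by
        calc SX < ∑ _j : Fin n, (1:ℝ) := by
              apply Finset.sum_lt_sum (fun j' _ => ap_x_le_one)
              exact ⟨j, Finset.mem_univ j, ap_x_lt_one hunc⟩
          _ = n := by simp
      linarith
    have hIcard : I.card = k := by
      have : (k : ℝ) ≤ I.card := by linarith
      exact le_antisymm hIle (by exact_mod_cast this)
    exact ⟨I, hIcard, hcover⟩

end
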